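/- Let P be a super-uniform random variable (ℙ(P ≤ x) ≤ x for all x ∈ [0,1]), let m ≥ 1, q ∈ [0,1], and let B_1,…,B_m be pairwise disjoint events whose union has probability 1. If, setting A_t = B_1 ∪ ⋯ ∪ B_t, the conditional probabilities satisfy ℙ(A_s | P ≤ sq/m) ≤ ℙ(A_s | P ≤ (s+1)q/m) for all 1 ≤ s ≤ m−1, then ∑_{s=1}^{m} (1/s) ℙ(P ≤ sq/m, B_s) ≤ q/m. -/

import Mathlib

open MeasureTheory ProbabilityTheory
open scoped ENNReal

private lemma inter_eq_mul_cond {Ω : Type*} [MeasurableSpace Ω] (μ : Measure Ω)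
    [IsProbabilityMeasure μ] {S : Set Ω} (hS : MeasurableSet S) (t : Set Ω) :
    μ (S ∩ t) = μ S * ProbabilityTheory.cond μ S t := by
  rw [ProbabilityTheory.cond_apply hS]
  rcases eq_or_ne (μ S) 0 with h0 | h0
  · rw [h0, zero_mul]
    exact le_antisymm (h0 ▸ measure_mono Set.inter_subset_left) bot_le
  · rw [← mul_assoc, ENNReal.mul_inv_cancel h0 (measure_ne_top μ S), one_mul]

private lemma cond_le_one' {Ω : Type*} [MeasurableSpace Ω] (μ : Measure Ω)
    [IsProbabilityMeasure μ] {S : Set Ω} (hS : MeasurableSet S) (t : Set Ω) :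
    ProbabilityTheory.cond μ S t ≤ 1 := by
  rw [ProbabilityTheory.cond_apply hS]
  rcases eq_or_ne (μ S) 0 with h0 | h0
  · have h1 : μ (S ∩ t) = 0 := measure_mono_null Set.inter_subset_left h0
    simp [h1]
  · calc (μ S)⁻¹ * μ (S ∩ t) ≤ (μ S)⁻¹ * μ S :=
          mul_le_mul_of_nonneg_left (measure_mono Set.inter_subset_left) zero_le
    _ = 1 := ENNReal.inv_mul_cancel h0 (measure_ne_top μ S)

/-- Key telescoping step for FDR control under PRDS: for a super-uniform `P`,
disjoint events `B 1, …, B m` whose union has probability one, and monotone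
conditional probabilities of the increasing unions `A s = B 1 ∪ ⋯ ∪ B s`,
we get `∑_{s=1}^m (1/s) ℙ(P ≤ sq/m, B s) ≤ q/m`. -/
theorem stmt2 {Ω : Type*} [MeasurableSpace Ω] (μ : Measure Ω) [IsProbabilityMeasure μ]
    (P : Ω → ℝ) (hP : Measurable P)
    (hsup : ∀ x ∈ Set.Icc (0 : ℝ) 1, μ {ω | P ω ≤ x} ≤ ENNReal.ofReal x)
    (m : ℕ) (hm : 1 ≤ m) (q : ℝ) (hq : q ∈ Set.Icc (0 : ℝ) 1)
    (B : ℕ → Set Ω) (hBmeas : ∀ s, MeasurableSet (B s))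
    (hdisj : ∀ s ∈ Finset.Icc 1 m, ∀ t ∈ Finset.Icc 1 m, s ≠ t → Disjoint (B s) (B t))
    (hcover : μ (⋃ s ∈ Finset.Icc 1 m, B s) = 1)
    (A : ℕ → Set Ω) (hA : ∀ t, A t = ⋃ s ∈ Finset.Icc 1 t, B s)
    (hmono : ∀ s, 1 ≤ s → s ≤ m - 1 →
      (ProbabilityTheory.cond μ {ω | P ω ≤ (s : ℝ) * q / m}) (A s) ≤
      (ProbabilityTheory.cond μ {ω | P ω ≤ ((s : ℝ) + 1) * q / m}) (A s)) :
    ∑ s ∈ Finset.Icc 1 m, (1 / (s : ℝ≥0∞)) * μ ({ω | P ω ≤ (s : ℝ) * q / m} ∩ B s) ≤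
      ENNReal.ofReal (q / m) := by
  have hm0 : (0 : ℝ) < m := by exact_mod_cast hm
  set S : ℕ → Set Ω := fun s => {ω | P ω ≤ (s : ℝ) * q / m} with hSdef
  have hSmeas : ∀ s, MeasurableSet (S s) := fun s => measurableSet_le hP measurable_const
  -- per-term bound
  have hterm : ∀ s ∈ Finset.Icc 1 m,
      (1 / (s : ℝ≥0∞)) * μ (S s ∩ B s) ≤
        ENNReal.ofReal (q / m) * ProbabilityTheory.cond μ (S s) (B s) := by
    intro s hs
    rw [Finset.mem_Icc] at hs
    have hs1 : 1 ≤ s := hs.1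
    have hsm : s ≤ m := hs.2
    have hx : ((s : ℝ) * q / m) ∈ Set.Icc (0 : ℝ) 1 := by
      constructor
      · exact div_nonneg (mul_nonneg (Nat.cast_nonneg s) hq.1) hm0.le
      · rw [div_le_one hm0]
        calc (s : ℝ) * q ≤ (m : ℝ) * q := by
              apply mul_le_mul_of_nonneg_right _ hq.1
              exact_mod_cast hsm
        _ ≤ (m : ℝ) * 1 := by nlinarith [hq.2]
        _ = m := mul_one _
    have hμS : μ (S s) ≤ (s : ℝ≥0∞) * ENNReal.ofReal (q / m) := by
      calc μ (S s) ≤ ENNReal.ofReal ((s : ℝ) * q / m) := hsup _ hx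
      _ = (s : ℝ≥0∞) * ENNReal.ofReal (q / m) := by
          rw [mul_div_assoc, ENNReal.ofReal_mul (Nat.cast_nonneg s), ENNReal.ofReal_natCast]
    calc (1 / (s : ℝ≥0∞)) * μ (S s ∩ B s)
        = (1 / (s : ℝ≥0∞)) * (μ (S s) * ProbabilityTheory.cond μ (S s) (B s)) := by
          rw [inter_eq_mul_cond μ (hSmeas s)]
      _ ≤ (1 / (s : ℝ≥0∞)) * ((s : ℝ≥0∞) * ENNReal.ofReal (q / m) *
            ProbabilityTheory.cond μ (S s) (B s)) :=
          mul_le_mul_of_nonneg_left (mul_le_mul_of_nonneg_right hμS zero_le) zero_le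
      _ = ((1 / (s : ℝ≥0∞)) * (s : ℝ≥0∞)) *
            (ENNReal.ofReal (q / m) * ProbabilityTheory.cond μ (S s) (B s)) := by ring
      _ = ENNReal.ofReal (q / m) * ProbabilityTheory.cond μ (S s) (B s) := by
          rw [one_div, ENNReal.inv_mul_cancel (by exact_mod_cast (by omega : s ≠ 0))
            (ENNReal.natCast_ne_top s), one_mul]
  -- telescoping bound on the sum of conditional probabilities
  have htel : ∀ n, n ≤ m →
      ∑ s ∈ Finset.Icc 1 n, ProbabilityTheory.cond μ (S s) (B s) ≤
        ProbabilityTheory.cond μ (S n) (A n) := by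
    intro n
    induction n with
    | zero => intro _; simp
    | succ n ih =>
      intro hnm
      have hnm' : n ≤ m := Nat.le_of_succ_le hnm
      have hAsplit : A (n + 1) = A n ∪ B (n + 1) := by
        rw [hA, hA]
        ext x
        simp only [Set.mem_iUnion, Set.mem_union, Finset.mem_Icc, exists_prop]
        constructor
        · rintro ⟨s, ⟨h1, h2⟩, hx⟩
          rcases Nat.lt_or_ge s (n + 1) with h | h
          · exact Or.inl ⟨s, ⟨h1, by omega⟩, hx⟩
          · exact Or.inr ((by omega : s = n + 1) ▸ hx)
        · rintro (⟨s, ⟨h1, h2⟩, hx⟩ | hx)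
          · exact ⟨s, ⟨h1, by omega⟩, hx⟩
          · exact ⟨n + 1, ⟨by omega, le_rfl⟩, hx⟩
      have hABdisj : Disjoint (A n) (B (n + 1)) := by
        rw [hA]
        simp only [Set.disjoint_iUnion_left]
        intro s hs
        rw [Finset.mem_Icc] at hs
        exact hdisj s (Finset.mem_Icc.mpr ⟨hs.1, le_trans hs.2 hnm'⟩)
          (n + 1) (Finset.mem_Icc.mpr ⟨Nat.succ_le_succ (Nat.zero_le n), hnm⟩)
          (by omega)
      have hAmeas : MeasurableSet (A n) := by
        rw [hA]; exact (Finset.Icc 1 n).measurableSet_biUnion (fun s _ => hBmeas s)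
      have hsum : ProbabilityTheory.cond μ (S (n + 1)) (A (n + 1)) =
          ProbabilityTheory.cond μ (S (n + 1)) (A n) +
          ProbabilityTheory.cond μ (S (n + 1)) (B (n + 1)) := by
        rw [hAsplit]
        exact measure_union hABdisj (hBmeas (n + 1))
      have hmid : ProbabilityTheory.cond μ (S n) (A n) ≤
          ProbabilityTheory.cond μ (S (n + 1)) (A n) := by
        rcases Nat.eq_zero_or_pos n with h0 | hpos
        · subst h0
          have : A 0 = (∅ : Set Ω) := by rw [hA]; simp
          simp [this]
        · have hS1 : S (n + 1) = {ω | P ω ≤ ((n : ℝ) + 1) * q / m} := by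
            simp [hSdef, Nat.cast_succ]
          rw [hS1]
          exact hmono n hpos (by omega)
      calc ∑ s ∈ Finset.Icc 1 (n + 1), ProbabilityTheory.cond μ (S s) (B s)
          = (∑ s ∈ Finset.Icc 1 n, ProbabilityTheory.cond μ (S s) (B s)) +
            ProbabilityTheory.cond μ (S (n + 1)) (B (n + 1)) := by
            rw [← Finset.sum_Icc_succ_top (Nat.succ_le_succ (Nat.zero_le n))]
        _ ≤ ProbabilityTheory.cond μ (S n) (A n) +
            ProbabilityTheory.cond μ (S (n + 1)) (B (n + 1)) :=
            add_le_add (ih hnm') le_rfl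
        _ ≤ ProbabilityTheory.cond μ (S (n + 1)) (A n) +
            ProbabilityTheory.cond μ (S (n + 1)) (B (n + 1)) :=
            add_le_add hmid le_rfl
        _ = ProbabilityTheory.cond μ (S (n + 1)) (A (n + 1)) := hsum.symm
  calc ∑ s ∈ Finset.Icc 1 m, (1 / (s : ℝ≥0∞)) * μ (S s ∩ B s)
      ≤ ∑ s ∈ Finset.Icc 1 m,
          ENNReal.ofReal (q / m) * ProbabilityTheory.cond μ (S s) (B s) :=
        Finset.sum_le_sum hterm
    _ = ENNReal.ofReal (q / m) *
          ∑ s ∈ Finset.Icc 1 m, ProbabilityTheory.cond μ (S s) (B s) := by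
        rw [Finset.mul_sum]
    _ ≤ ENNReal.ofReal (q / m) * ProbabilityTheory.cond μ (S m) (A m) :=
        mul_le_mul_of_nonneg_left (htel m le_rfl) zero_le
    _ ≤ ENNReal.ofReal (q / m) * 1 :=
        mul_le_mul_of_nonneg_left (cond_le_one' μ (hSmeas m) _) zero_le
    _ = ENNReal.ofReal (q / m) := mul_one _
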